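/- Let d > 1 and 1 ≤ p < 2d/(d+1), and set m := d(2/p − 1) (so that m > 1) and s := (m+p−2)/p. Then for all real numbers a > b > 0 one has (a^{m−1} − b^{m−1})/(a − b) ≥ ((m−1)/s^p) · ((a^s − b^s)/(a − b))^p. -/

import Mathlib

open MeasureTheory Set

/-- Jensen's inequality for the average of `x ^ r` over `Ioc b a`. -/
lemma jensen_rpow_aux (p : ℝ) (hp : 1 ≤ p) (r : ℝ) (hr : -1 < r) (hr2 : -1 < r * p)
    (b a : ℝ) (hb : 0 < b) (hab : b < a) :
    ((a - b)⁻¹ * ∫ x in b..a, x ^ r) ^ p ≤ (a - b)⁻¹ * ∫ x in b..a, x ^ (r * p) := by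
  have hba : 0 < a - b := by linarith
  have h0 : volume (Ioc b a) ≠ 0 := by
    rw [Real.volume_Ioc]
    simp only [ENNReal.ofReal_eq_zero, not_le, ne_eq]
    linarith
  have ht : volume (Ioc b a) ≠ ⊤ := by
    rw [Real.volume_Ioc]; exact ENNReal.ofReal_ne_top
  have hae : ∀ᵐ x ∂volume.restrict (Ioc b a), x ^ (r * p) = (x ^ r) ^ p := by
    filter_upwards [ae_restrict_mem measurableSet_Ioc] with x hx
    exact Real.rpow_mul (le_of_lt (hb.trans hx.1)) r p
  have hfi : IntegrableOn (fun x : ℝ => x ^ r) (Ioc b a) := by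
    rw [← intervalIntegrable_iff_integrableOn_Ioc_of_le hab.le]
    exact intervalIntegral.intervalIntegrable_rpow' hr
  have hfi2 : IntegrableOn (fun x : ℝ => x ^ (r * p)) (Ioc b a) := by
    rw [← intervalIntegrable_iff_integrableOn_Ioc_of_le hab.le]
    exact intervalIntegral.intervalIntegrable_rpow' hr2
  have hgi : IntegrableOn ((fun x : ℝ => x ^ p) ∘ fun x : ℝ => x ^ r) (Ioc b a) :=
    hfi2.congr hae
  have hfs : ∀ᵐ x ∂volume.restrict (Ioc b a), (fun x : ℝ => x ^ r) x ∈ Ici (0 : ℝ) := by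
    filter_upwards [ae_restrict_mem measurableSet_Ioc] with x hx
    exact Real.rpow_nonneg (le_of_lt (hb.trans hx.1)) r
  have hgc : ContinuousOn (fun x : ℝ => x ^ p) (Ici (0 : ℝ)) := fun x _ =>
    (Real.continuousAt_rpow_const x p (Or.inr (by linarith))).continuousWithinAt
  have key := ConvexOn.map_set_average_le (convexOn_rpow hp) hgc isClosed_Ici h0 ht hfs hfi hgi
  have havg : ∀ f : ℝ → ℝ, (⨍ x in Ioc b a, f x) = (a - b)⁻¹ * ∫ x in b..a, f x := by
    intro f
    rw [setAverage_eq, measureReal_def, Real.volume_Ioc, ENNReal.toReal_ofReal hba.le,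
      intervalIntegral.integral_of_le hab.le, smul_eq_mul]
  have hcongr : (∫ x in Ioc b a, (x ^ r) ^ p)
      = ∫ x in Ioc b a, x ^ (r * p) := integral_congr_ae (hae.mono fun x hx => hx.symm)
  rw [havg] at key
  calc ((a - b)⁻¹ * ∫ x in b..a, x ^ r) ^ p ≤ ⨍ x in Ioc b a, ((x : ℝ) ^ r) ^ p := key
    _ = (a - b)⁻¹ * ∫ x in b..a, x ^ (r * p) := by
        rw [setAverage_eq, hcongr, measureReal_def, Real.volume_Ioc, ENNReal.toReal_ofReal hba.le,
          intervalIntegral.integral_of_le hab.le, smul_eq_mul]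

/-- Lemma on elementary inequality for finite extinction time.
Let `d > 1` and `1 ≤ p < 2d/(d+1)`, set `m := d(2/p − 1)` and `s := (m+p−2)/p`.
Then for all `a > b > 0`,
`(a^{m−1} − b^{m−1})/(a − b) ≥ ((m−1)/s^p) ((a^s − b^s)/(a − b))^p`. -/
theorem stmt1 (d p m s : ℝ) (hd : 1 < d) (hp1 : 1 ≤ p) (hp2 : p < 2 * d / (d + 1))
    (hm : m = d * (2 / p - 1)) (hs : s = (m + p - 2) / p) :
    ∀ a b : ℝ, 0 < b → b < a →
      (a ^ (m - 1) - b ^ (m - 1)) / (a - b) ≥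
        (m - 1) / s ^ p * ((a ^ s - b ^ s) / (a - b)) ^ p := by
  have hp0 : (0 : ℝ) < p := lt_of_lt_of_le one_pos hp1
  have hd1 : (0 : ℝ) < d + 1 := by linarith
  have hpd : p * (d + 1) < 2 * d := (lt_div_iff₀ hd1).mp hp2
  have hmp : m * p = d * (2 - p) := by
    rw [hm]; field_simp
  have hm1 : 1 < m := by nlinarith
  have hsp : s * p = m + p - 2 := by
    rw [hs]; field_simp
  have hs0 : 0 < s := by rw [hs]; exact div_pos (by linarith) hp0
  have hkey : (s - 1) * p = m - 2 := by linear_combination hsp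
  intro a b hb hab
  have hba : 0 < a - b := by linarith
  have hJ1 : (∫ x in b..a, x ^ (s - 1)) = (a ^ s - b ^ s) / s := by
    rw [integral_rpow (Or.inl (by linarith))]
    have h1 : s - 1 + 1 = s := by ring
    rw [h1]
  have hJ2 : (∫ x in b..a, x ^ (m - 2)) = (a ^ (m - 1) - b ^ (m - 1)) / (m - 1) := by
    rw [integral_rpow (Or.inl (by linarith))]
    have h1 : m - 2 + 1 = m - 1 := by ring
    rw [h1]
  have hAs : 0 < a ^ s - b ^ s := by
    have := Real.rpow_lt_rpow hb.le hab hs0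
    linarith
  have jen := jensen_rpow_aux p hp1 (s - 1) (by linarith) (by rw [hkey]; linarith) b a hb hab
  rw [hkey, hJ1, hJ2] at jen
  have e1 : (a - b)⁻¹ * ((a ^ s - b ^ s) / s) = ((a ^ s - b ^ s) / (a - b)) / s := by ring
  rw [e1, Real.div_rpow (by positivity) hs0.le] at jen
  rw [ge_iff_le]
  have hm1' : (0 : ℝ) < m - 1 := by linarith
  calc (m - 1) / s ^ p * ((a ^ s - b ^ s) / (a - b)) ^ p
      = (m - 1) * (((a ^ s - b ^ s) / (a - b)) ^ p / s ^ p) := by ring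
    _ ≤ (m - 1) * ((a - b)⁻¹ * ((a ^ (m - 1) - b ^ (m - 1)) / (m - 1))) :=
        mul_le_mul_of_nonneg_left jen hm1'.le
    _ = (a ^ (m - 1) - b ^ (m - 1)) / (a - b) := by
        field_simp
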